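/- Let L be an even lattice, T ⊆ L a primitive sublattice with orthogonal complement T^⊥, and suppose φ ∈ O(T) and ψ ∈ O(T^⊥) are isometries such that the induced maps on discriminant groups satisfy γ ∘ ψ̄ = φ̄ ∘ γ, where γ : M̄_⊥ → M̄ is the gluing isomorphism determined by L/(T ⊕ T^⊥) ⊆ A_T ⊕ A_{T^⊥}. Then φ ⊕ ψ extends to an isometry of L. -/

import Mathlib

lemma torsion_of_mem_ratSpan {V : Type*} [AddCommGroup V] [Module ℚ V]
    (T : Submodule ℤ V) {v : V} (hv : v ∈ Submodule.span ℚ (T : Set V)) :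
    ∃ n : ℤ, n ≠ 0 ∧ n • v ∈ T := by
  induction hv using Submodule.span_induction with
  | mem x hx => exact ⟨1, one_ne_zero, by simpa using hx⟩
  | zero => exact ⟨1, one_ne_zero, by simp⟩
  | add x y _ _ hx hy =>
      obtain ⟨n, hn, hnx⟩ := hx; obtain ⟨m, hm, hmy⟩ := hy
      refine ⟨n * m, mul_ne_zero hn hm, ?_⟩
      rw [smul_add, show (n*m) • x = m • (n • x) by rw [mul_comm, mul_smul],
        mul_smul]
      exact T.add_mem (T.smul_mem m hnx) (T.smul_mem n hmy)
  | smul q x _ hx =>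
      obtain ⟨n, hn, hnx⟩ := hx
      refine ⟨n * q.den, mul_ne_zero hn (Int.natCast_ne_zero.mpr q.den_nz), ?_⟩
      have key : (n * (q.den : ℤ)) • (q • x) = q.num • (n • x) := by
        rw [← Int.cast_smul_eq_zsmul ℚ (n * (q.den : ℤ)), smul_smul,
          ← Int.cast_smul_eq_zsmul ℚ q.num, ← Int.cast_smul_eq_zsmul ℚ n,
          smul_smul]
        congr 1
        push_cast
        rw [mul_assoc, mul_comm (q.den : ℚ) q]
        rw [show q * q.den = (q.num : ℚ) by
          have hd : (q.den : ℚ) ≠ 0 := by exact_mod_cast q.den_nz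
          nth_rewrite 1 [← Rat.num_div_den q]
          exact div_mul_cancel₀ _ hd]
        ring
      rw [key]
      exact T.smul_mem _ hnx


/-- **Nikulin's gluing criterion (Corollary 1.5.2 of Nikulin).**  Let `L` be an even
lattice: a full finitely generated `ℤ`-lattice in a finite-dimensional rational quadratic
space `(V, b)`, with `b` symmetric, non-degenerate, integral and even on `L`.  Let `T ⊆ L`
be a primitive sublattice with orthogonal complement `P = T^⊥` in `L`, whose rational
spans are complementary in `V`.  Let `φ` be an isometry of `T` and `ψ` an isometry of `P`,
extended to isometries of `V` fixing the rational span of the other summand pointwise.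
Assume the induced maps on the discriminant groups are compatible with the gluing
isomorphism `γ` determined by `L/(T ⊕ P) ⊆ A_T ⊕ A_P` (i.e. `γ ∘ ψ̄ = φ̄ ∘ γ`); concretely:
for every `x ∈ L`, with components `x_T`, `x_P` along the decomposition
`V = span T ⊕ span P`, there is `y ∈ L` with `φ(x_T) ≡ y_T mod T` and
`ψ(x_P) ≡ y_P mod P`.  Then `φ ⊕ ψ` extends to an isometry of `L`: the isometry
`x ↦ φ(ψ x)` of `V` maps `L` onto `L`, and it restricts to `φ` on `T` and to `ψ` on `P`. -/
theorem nikulin_gluing_extension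
    (V : Type*) [AddCommGroup V] [Module ℚ V] [FiniteDimensional ℚ V]
    (b : LinearMap.BilinForm ℚ V) (hsymm : ∀ x y, b x y = b y x)
    (hnd : b.Nondegenerate)
    (L : Submodule ℤ V) (hLfg : L.FG) (hLfull : Submodule.span ℚ (L : Set V) = ⊤)
    (hint : ∀ x ∈ L, ∀ y ∈ L, ∃ n : ℤ, b x y = n)
    (heven : ∀ x ∈ L, ∃ n : ℤ, b x x = 2 * n)
    (T P : Submodule ℤ V) (hTL : T ≤ L)
    (hTprim : ∀ x ∈ L, (∃ n : ℤ, n ≠ 0 ∧ n • x ∈ T) → x ∈ T)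
    (hP : ∀ x : V, x ∈ P ↔ x ∈ L ∧ ∀ t ∈ T, b x t = 0)
    (hcompl : IsCompl (Submodule.span ℚ (T : Set V)) (Submodule.span ℚ (P : Set V)))
    (φ ψ : V ≃ₗ[ℚ] V)
    (hφisom : ∀ x y, b (φ x) (φ y) = b x y) (hψisom : ∀ x y, b (ψ x) (ψ y) = b x y)
    (hφT : φ '' (T : Set V) = (T : Set V))
    (hφfix : ∀ x ∈ Submodule.span ℚ (P : Set V), φ x = x)
    (hψP : ψ '' (P : Set V) = (P : Set V))
    (hψfix : ∀ x ∈ Submodule.span ℚ (T : Set V), ψ x = x)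
    (hglue : ∀ x ∈ L, ∃ y ∈ L,
      ((Submodule.linearProjOfIsCompl _ _ hcompl (φ (ψ x)) : V)
          - (Submodule.linearProjOfIsCompl _ _ hcompl y : V)) ∈ T
        ∧ ((Submodule.linearProjOfIsCompl _ _ hcompl.symm (φ (ψ x)) : V)
          - (Submodule.linearProjOfIsCompl _ _ hcompl.symm y : V)) ∈ P) :
    (fun x => φ (ψ x)) '' (L : Set V) = (L : Set V)
    ∧ (∀ t ∈ T, φ (ψ t) = φ t)
    ∧ (∀ p ∈ P, φ (ψ p) = ψ p) := by
  classical
  -- basic containments and fixing properties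
  have hPL : P ≤ L := fun x hx => ((hP x).1 hx).1
  have hψT : ∀ t ∈ T, ψ t = t := fun t ht => hψfix t (Submodule.subset_span ht)
  have hφP : ∀ p ∈ P, φ p = p := fun p hp => hφfix p (Submodule.subset_span hp)
  have hres_T : ∀ t ∈ T, φ (ψ t) = φ t := fun t ht => by rw [hψT t ht]
  have hres_P : ∀ p ∈ P, φ (ψ p) = ψ p := by
    intro p hp
    have hψp : ψ p ∈ P := by
      have h0 : ψ p ∈ ψ '' (P : Set V) := Set.mem_image_of_mem _ hp
      rwa [hψP] at h0
    exact hφP _ hψp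
  refine ⟨?_, hres_T, hres_P⟩
  -- the glued map
  set g : V ≃ₗ[ℚ] V := ψ.trans φ with hgdef
  have hgapp : ∀ x : V, g x = φ (ψ x) := fun x => rfl
  set S : Submodule ℤ V := T ⊔ P with hSdef
  have hSL : S ≤ L := sup_le hTL hPL
  -- g maps S into S
  have hgS : ∀ s ∈ S, g s ∈ S := by
    intro s hs
    rw [Submodule.mem_sup] at hs
    obtain ⟨t, ht, p, hp, rfl⟩ := hs
    have h1 : g (t + p) = φ t + ψ p := by
      rw [hgapp, map_add, map_add, hψT t ht, hres_P p hp]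
    rw [h1]
    have hφt : φ t ∈ T := by
      have h0 : φ t ∈ φ '' (T : Set V) := Set.mem_image_of_mem _ ht
      rwa [hφT] at h0
    have hψp : ψ p ∈ P := by
      have h0 : ψ p ∈ ψ '' (P : Set V) := Set.mem_image_of_mem _ hp
      rwa [hψP] at h0
    exact Submodule.mem_sup.mpr ⟨φ t, hφt, ψ p, hψp, rfl⟩
  -- S is contained in g '' S
  have hSg : ∀ s ∈ S, ∃ s' ∈ S, g s' = s := by
    intro s hs
    rw [Submodule.mem_sup] at hs
    obtain ⟨t, ht, p, hp, rfl⟩ := hs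
    obtain ⟨t', ht', hφt'⟩ : ∃ t' ∈ T, φ t' = t := by
      have : t ∈ φ '' (T : Set V) := by rw [hφT]; exact ht
      obtain ⟨t', ht', h⟩ := this; exact ⟨t', ht', h⟩
    obtain ⟨p', hp', hψp'⟩ : ∃ p' ∈ P, ψ p' = p := by
      have : p ∈ ψ '' (P : Set V) := by rw [hψP]; exact hp
      obtain ⟨p', hp', h⟩ := this; exact ⟨p', hp', h⟩
    refine ⟨t' + p', Submodule.mem_sup.mpr ⟨t', ht', p', hp', rfl⟩, ?_⟩
    rw [hgapp, map_add, map_add, hψT t' ht', hres_P p' hp', hφt', hψp']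
  -- g maps L into L, using the gluing condition
  have hgL : ∀ x ∈ L, g x ∈ L := by
    intro x hx
    obtain ⟨y, hy, h1, h2⟩ := hglue x hx
    set A := (Submodule.linearProjOfIsCompl _ _ hcompl (φ (ψ x)) : V) with hA
    set B := (Submodule.linearProjOfIsCompl _ _ hcompl y : V) with hB
    set C := (Submodule.linearProjOfIsCompl _ _ hcompl.symm (φ (ψ x)) : V) with hC
    set D := (Submodule.linearProjOfIsCompl _ _ hcompl.symm y : V) with hD
    have e1 : A + C = φ (ψ x) :=
      by have := Submodule.projection_add_projection_eq_self hcompl (φ (ψ x)); exact this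
    have e2 : B + D = y :=
      by have := Submodule.projection_add_projection_eq_self hcompl y; exact this
    have hgx : g x = (A - B) + (C - D) + y := by
      have habel : (A - B) + (C - D) + y = (A + C) - (B + D) + y := by abel
      rw [hgapp, habel, e1, e2]
      abel
    rw [hgx]
    exact L.add_mem (L.add_mem (hTL h1) (hPL h2)) hy
  -- torsion: every vector has a nonzero integer multiple in S
  have htor : ∀ v : V, ∃ n : ℤ, n ≠ 0 ∧ n • v ∈ S := by
    intro v
    have hv : v ∈ Submodule.span ℚ (T : Set V) ⊔ Submodule.span ℚ (P : Set V) := by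
      rw [hcompl.sup_eq_top]; trivial
    rw [Submodule.mem_sup] at hv
    obtain ⟨a, ha, c, hc, rfl⟩ := hv
    obtain ⟨n, hn, hna⟩ := torsion_of_mem_ratSpan T ha
    obtain ⟨m, hm, hmc⟩ := torsion_of_mem_ratSpan P hc
    refine ⟨n * m, mul_ne_zero hn hm, ?_⟩
    rw [smul_add, show (n*m) • a = m • (n • a) by rw [mul_comm, mul_smul], mul_smul]
    exact S.add_mem (S.smul_mem m ((le_sup_left : T ≤ S) hna))
      (S.smul_mem n ((le_sup_right : P ≤ S) hmc))
  -- the quotient L / S is finite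
  haveI : Module.Finite ℤ ↥L := Module.Finite.iff_fg.mpr hLfg
  set S' : Submodule ℤ ↥L := S.comap L.subtype with hS'def
  haveI hfin : Finite (↥L ⧸ S') := by
    apply Module.finite_of_fg_torsion
    intro q
    obtain ⟨x, rfl⟩ := Submodule.Quotient.mk_surjective S' q
    obtain ⟨n, hn, hnx⟩ := htor (x : V)
    refine ⟨⟨n, mem_nonZeroDivisors_of_ne_zero hn⟩, ?_⟩
    rw [Submonoid.smul_def]
    show n • (Submodule.Quotient.mk x : ↥L ⧸ S') = 0
    rw [← Submodule.Quotient.mk_smul, Submodule.Quotient.mk_eq_zero]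
    show ((n • x : ↥L) : V) ∈ S
    simpa using hnx
  -- the induced endomorphism of the quotient
  let G : ↥L →ₗ[ℤ] ↥L :=
    { toFun := fun x => ⟨g x, hgL x x.2⟩
      map_add' := fun x y => Subtype.ext (by simp)
      map_smul' := fun n x => Subtype.ext (by simp) }
  have hGapp : ∀ x : ↥L, ((G x : ↥L) : V) = g x := fun x => rfl
  have hGS : S' ≤ S'.comap G := by
    intro x hx
    exact hgS _ hx
  let Gbar := Submodule.mapQ S' S' G hGS
  have hkey : ∀ v : V, g v ∈ S → v ∈ S := by
    intro v hv
    obtain ⟨s', hs', hgs'⟩ := hSg _ hv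
    have := g.injective hgs'
    rwa [← this]
  have hinj : Function.Injective Gbar := by
    intro a bb hab
    obtain ⟨x, rfl⟩ := Submodule.Quotient.mk_surjective S' a
    obtain ⟨y, rfl⟩ := Submodule.Quotient.mk_surjective S' bb
    rw [Submodule.mapQ_apply, Submodule.mapQ_apply, Submodule.Quotient.eq] at hab
    rw [Submodule.Quotient.eq]
    have h1 : g ((x : V) - y) ∈ S := by
      have h2 : ((G x - G y : ↥L) : V) ∈ S := hab
      simpa [map_sub, hGapp] using h2
    have h3 := hkey _ h1
    show ((x - y : ↥L) : V) ∈ S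
    simpa using h3
  have hsurj : Function.Surjective Gbar := Finite.injective_iff_surjective.mp hinj
  -- conclude the image equality
  apply Set.Subset.antisymm
  · rintro _ ⟨x, hx, rfl⟩
    exact hgL x hx
  · intro z hz
    obtain ⟨a, ha⟩ := hsurj (Submodule.Quotient.mk ⟨z, hz⟩)
    obtain ⟨x, rfl⟩ := Submodule.Quotient.mk_surjective S' a
    rw [Submodule.mapQ_apply, Submodule.Quotient.eq] at ha
    have h : g x - z ∈ S := by
      have h2 : ((G x - ⟨z, hz⟩ : ↥L) : V) ∈ S := ha
      simpa [hGapp] using h2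
    obtain ⟨s', hs', hgs'⟩ := hSg _ h
    refine ⟨(x : V) - s', L.sub_mem x.2 (hSL hs'), ?_⟩
    show φ (ψ ((x : V) - s')) = z
    have : g ((x : V) - s') = z := by rw [map_sub, hgs']; abel
    exact this
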